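/- arXiv:1909.02911 — 2 statements merged into one kernel-verified Lean document; each statement's English description precedes it below -/
import Mathlib

section
/- Let W and W₁ be graphons on [0,1], (Ω,μ) a probability space, and φ, ψ : Ω → [0,1] measure-preserving maps such that W(φ(x),φ(y)) = W₁(ψ(x),ψ(y)) for μ²-almost every (x,y) ∈ Ω². Then for μ-almost every x ∈ Ω, D(φ(x)) = D₁(ψ(x)), where D(x) = ∫₀¹ W(x,y) dy and D₁(x) = ∫₀¹ W₁(x,y) dy. -/
open MeasureTheory Set

/-- A graphon on `[0,1]` (represented as a function on all of `ℝ`):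
a symmetric measurable function with values in `[0,1]`. -/
def IsGraphon (W : ℝ → ℝ → ℝ) : Prop :=
  Measurable (Function.uncurry W) ∧ (∀ x y, W x y = W y x) ∧
    ∀ x y, W x y ∈ Set.Icc (0:ℝ) 1

theorem stmt6 {Ω : Type*} [MeasurableSpace Ω] (μ : Measure Ω) [IsProbabilityMeasure μ]
    (W W₁ : ℝ → ℝ → ℝ) (hW : IsGraphon W) (hW₁ : IsGraphon W₁)
    (φ ψ : Ω → ℝ)
    (hφ : MeasurePreserving φ μ (volume.restrict (Set.Icc (0:ℝ) 1)))
    (hψ : MeasurePreserving ψ μ (volume.restrict (Set.Icc (0:ℝ) 1)))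
    (heq : ∀ᵐ p ∂(μ.prod μ), W (φ p.1) (φ p.2) = W₁ (ψ p.1) (ψ p.2)) :
    ∀ᵐ x ∂μ, (∫ y in Set.Icc (0:ℝ) 1, W (φ x) y) = ∫ y in Set.Icc (0:ℝ) 1, W₁ (ψ x) y := by
  have hWm := hW.1
  have hW₁m := hW₁.1
  filter_upwards [Measure.ae_ae_of_ae_prod heq] with x hx
  have h1 : (∫ y in Set.Icc (0:ℝ) 1, W (φ x) y) = ∫ y, W (φ x) (φ y) ∂μ := by
    rw [← hφ.map_eq]
    exact integral_map hφ.measurable.aemeasurable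
      ((hWm.comp (measurable_const.prodMk measurable_id)).aestronglyMeasurable)
  have h2 : (∫ y in Set.Icc (0:ℝ) 1, W₁ (ψ x) y) = ∫ y, W₁ (ψ x) (ψ y) ∂μ := by
    rw [← hψ.map_eq]
    exact integral_map hψ.measurable.aemeasurable
      ((hW₁m.comp (measurable_const.prodMk measurable_id)).aestronglyMeasurable)
  rw [h1, h2]
  exact integral_congr_ae hx
end

section
/- For the graphon W(x,y) = 4xy on (0,1/2)², = 1/2 when x+y > 3/2, = 0 otherwise, and for a.e. x ∈ (0,1), h(x) ∈ {0, 1/2}; in particular h(x) ≠ 1/4 for a.e. x ∈ [0,1], where h(x) = Leb{y : W(x,y) ∉ {0,1/2}}. -/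
open MeasureTheory Set

/-- The example graphon. -/
noncomputable def W (x y : ℝ) : ℝ :=
  if x ∈ Set.Ioo (0:ℝ) (1/2) ∧ y ∈ Set.Ioo (0:ℝ) (1/2) then 4 * x * y
  else if x + y > 3/2 then 1/2 else 0

/-- `h x` is the measure of the set of `y` where `W x y` is neither `0` nor `1/2`. -/
noncomputable def h (x : ℝ) : ℝ :=
  (volume {y ∈ Set.Icc (0:ℝ) 1 | W x y ∉ ({0, 1/2} : Set ℝ)}).toReal

lemma W_outside {x y : ℝ} (hxy : ¬(x ∈ Set.Ioo (0:ℝ) (1/2) ∧ y ∈ Set.Ioo (0:ℝ) (1/2))) :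
    W x y ∈ ({0, 1/2} : Set ℝ) := by
  unfold W
  rw [if_neg hxy]
  split_ifs
  · right; rfl
  · left; rfl

lemma W_inside {x y : ℝ} (hx : x ∈ Set.Ioo (0:ℝ) (1/2)) (hy : y ∈ Set.Ioo (0:ℝ) (1/2)) :
    W x y = 4 * x * y := by
  unfold W
  rw [if_pos ⟨hx, hy⟩]

lemma h_mem (x : ℝ) : h x ∈ ({0, 1/2} : Set ℝ) := by
  by_cases hx : x ∈ Set.Ioo (0:ℝ) (1/2)
  · right
    have hx0 : (0:ℝ) < x := hx.1
    have hx0' : x ≠ 0 := ne_of_gt hx0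
    have hset : {y ∈ Set.Icc (0:ℝ) 1 | W x y ∉ ({0, 1/2} : Set ℝ)}
        = Set.Ioo (0:ℝ) (1/2) \ {1/(8*x)} := by
      ext y
      constructor
      · rintro ⟨hy, hW⟩
        by_cases hy2 : y ∈ Set.Ioo (0:ℝ) (1/2)
        · refine ⟨hy2, ?_⟩
          intro hc
          apply hW
          right
          rw [W_inside hx hy2, Set.mem_singleton_iff.mp hc]
          field_simp
          norm_num
        · exact absurd (W_outside (fun h => hy2 h.2)) hW
      · rintro ⟨hyIoo, hne⟩
        have hy0 : (0:ℝ) < y := hyIoo.1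
        have hy12 : y < 1/2 := hyIoo.2
        refine ⟨⟨le_of_lt hy0, by linarith⟩, ?_⟩
        rw [W_inside hx hyIoo]
        rintro (h0 | h12)
        · have : (4:ℝ) * x * y > 0 := by positivity
          linarith
        · apply hne
          rw [Set.mem_singleton_iff] at h12 ⊢
          field_simp
          linarith
    unfold h
    rw [hset, measure_diff_null (measure_singleton _)]
    rw [Real.volume_Ioo]
    norm_num
  · left
    have hset : {y ∈ Set.Icc (0:ℝ) 1 | W x y ∉ ({0, 1/2} : Set ℝ)} = ∅ := by
      ext y
      simp only [Set.mem_setOf_eq, Set.mem_empty_iff_false, iff_false, not_and]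
      intro _ hW
      exact hW (W_outside (fun h => hx h.1))
    unfold h
    rw [hset]
    simp

theorem stmt14 :
    (∀ᵐ x ∂(volume.restrict (Set.Ioo (0:ℝ) 1)), h x ∈ ({0, 1/2} : Set ℝ)) ∧
    (∀ᵐ x ∂(volume.restrict (Set.Icc (0:ℝ) 1)), h x ≠ 1/4) := by
  constructor
  · exact Filter.Eventually.of_forall h_mem
  · refine Filter.Eventually.of_forall (fun x => ?_)
    rcases h_mem x with h0 | h12
    · rw [h0]; norm_num
    · rw [Set.mem_singleton_iff.mp h12]; norm_num
end
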